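/- Let G be a (2P_2, \overline{P_2+P_3})-free atom containing an induced 5-cycle on vertices v_1,…,v_5. Then for every i ∈ {1,…,5} (indices modulo 5), the set V_{{i,i+1,i+3}} ∪ V_{{i,i+1,i+2,i+3}} contains at most one vertex. -/

import Mathlib

open SimpleGraph

/-- The graph `2P₂`: two disjoint edges, on vertex set `Fin 4`. -/
def twoP2 : SimpleGraph (Fin 4) :=
  SimpleGraph.fromRel (fun a b => (a = 0 ∧ b = 1) ∨ (a = 2 ∧ b = 3))

/-- The graph `P₂ + P₃`: disjoint union of a path on 2 vertices (0-1)
and a path on 3 vertices (2-3-4), on vertex set `Fin 5`. -/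
def P2P3 : SimpleGraph (Fin 5) :=
  SimpleGraph.fromRel (fun a b => (a = 0 ∧ b = 1) ∨ (a = 2 ∧ b = 3) ∨ (a = 3 ∧ b = 4))

/-- `G` is `H`-free: `G` contains no induced subgraph isomorphic to `H`. -/
def Free {W V : Type*} (H : SimpleGraph W) (G : SimpleGraph V) : Prop :=
  IsEmpty (H ↪g G)

/-- `G` has no clique cut-set: for every clique `K`, deleting the vertices of `K`
does not disconnect the graph.  A graph with this property is called an atom. -/
def NoCliqueCutset {V : Type*} (G : SimpleGraph V) : Prop :=
  ∀ K : Set V, G.IsClique K → (G.induce (Kᶜ : Set V)).Preconnected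

/-- For `S ⊆ Fin 5`, the set of vertices `x` outside the cycle `v 0, …, v 4` whose
neighbourhood on the cycle is exactly `{v i : i ∈ S}`. -/
def vSet {V : Type*} (G : SimpleGraph V) (v : Fin 5 → V) (S : Set (Fin 5)) : Set V :=
  {x | (∀ i, x ≠ v i) ∧ ∀ i, (G.Adj x (v i) ↔ i ∈ S)}

/-- If `G` has five vertices whose induced non-edges form `P₂ + P₃`
(non-edges `a0-a1`, `a2-a3`, `a3-a4`), then `P2P3ᶜ` embeds into `G`. -/
lemma coP2P3_embed {V : Type*} (G : SimpleGraph V) (a0 a1 a2 a3 a4 : V)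
    (h02 : G.Adj a0 a2) (h03 : G.Adj a0 a3) (h04 : G.Adj a0 a4)
    (h12 : G.Adj a1 a2) (h13 : G.Adj a1 a3) (h14 : G.Adj a1 a4)
    (h24 : G.Adj a2 a4)
    (n01 : ¬ G.Adj a0 a1) (n23 : ¬ G.Adj a2 a3) (n34 : ¬ G.Adj a3 a4)
    (d01 : a0 ≠ a1) (d23 : a2 ≠ a3) (d34 : a3 ≠ a4) :
    Nonempty (P2P3ᶜ ↪g G) := by
  have h20 := h02.symm; have h30 := h03.symm; have h40 := h04.symm
  have h21 := h12.symm; have h31 := h13.symm; have h41 := h14.symm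
  have h42 := h24.symm
  have n10 : ¬ G.Adj a1 a0 := fun h => n01 h.symm
  have n32 : ¬ G.Adj a3 a2 := fun h => n23 h.symm
  have n43 : ¬ G.Adj a4 a3 := fun h => n34 h.symm
  have d10 := d01.symm; have d32 := d23.symm; have d43 := d34.symm
  refine ⟨⟨⟨![a0,a1,a2,a3,a4], ?_⟩, ?_⟩⟩
  · intro a b hab
    fin_cases a <;> fin_cases b <;>
      simp_all [h02.ne, h03.ne, h04.ne, h12.ne, h13.ne, h14.ne, h24.ne,
        h20.ne, h30.ne, h40.ne, h21.ne, h31.ne, h41.ne, h42.ne]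
  · intro a b
    change G.Adj (![a0,a1,a2,a3,a4] a) (![a0,a1,a2,a3,a4] b) ↔ _
    fin_cases a <;> fin_cases b <;>
      simp_all [P2P3, SimpleGraph.fromRel]

theorem clm_C5_V124_V1234_small {V : Type*} [Fintype V] (G : SimpleGraph V)
    (hfree1 : _root_.Free twoP2 G) (hfree2 : _root_.Free (P2P3ᶜ) G)
    (hatom : NoCliqueCutset G)
    (v : Fin 5 → V) (hv : Function.Injective v)
    (hC : ∀ i j : Fin 5, G.Adj (v i) (v j) ↔ (j = i + 1 ∨ i = j + 1)) :
    ∀ i : Fin 5,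
      (vSet G v {i, i + 1, i + 3} ∪ vSet G v {i, i + 1, i + 2, i + 3}).Subsingleton := by
  intro i
  -- facts extracted from membership in the union
  have key : ∀ x, x ∈ vSet G v {i, i + 1, i + 3} ∪ vSet G v {i, i + 1, i + 2, i + 3} →
      (∀ j, x ≠ v j) ∧ G.Adj x (v i) ∧ G.Adj x (v (i+1)) ∧ G.Adj x (v (i+3)) ∧
        ¬ G.Adj x (v (i+4)) := by
    intro x hx
    rcases hx with hx | hx <;> obtain ⟨hne, hadj⟩ := hx <;>
      refine ⟨hne, ?_, ?_, ?_, ?_⟩ <;>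
      rw [hadj] <;>
      simp only [Set.mem_insert_iff, Set.mem_singleton_iff] <;>
      [skip; skip; skip; push_neg; skip; skip; skip; push_neg] <;>
      first
        | (refine ⟨?_, ?_, ?_⟩ <;> intro h <;>
            simp only [Fin.ext_iff, Fin.add_def] at h <;> omega)
        | (refine ⟨?_, ?_, ?_, ?_⟩ <;> intro h <;>
            simp only [Fin.ext_iff, Fin.add_def] at h <;> omega)
        | tauto
  -- cycle adjacency facts
  have cyc : ∀ a b : Fin 5, G.Adj (v a) (v b) ↔ (b = a + 1 ∨ a = b + 1) := hC
  intro x hx y hy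
  by_contra hxy
  obtain ⟨hxne, hxi, hxi1, hxi3, hxi4⟩ := key x hx
  obtain ⟨hyne, hyi, hyi1, hyi3, hyi4⟩ := key y hy
  have hvii3 : ¬ G.Adj (v i) (v (i+3)) := by
    rw [cyc]; rintro (h | h) <;> simp only [Fin.ext_iff, Fin.add_def] at h <;> omega
  have hvi1i3 : ¬ G.Adj (v (i+1)) (v (i+3)) := by
    rw [cyc]; rintro (h | h) <;> simp only [Fin.ext_iff, Fin.add_def] at h <;> omega
  have hvii4 : G.Adj (v i) (v (i+4)) := by
    rw [cyc]; right; simp only [Fin.ext_iff, Fin.add_def]; omega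
  have hvi3i4 : G.Adj (v (i+3)) (v (i+4)) := by
    rw [cyc]; left; simp only [Fin.ext_iff, Fin.add_def]; omega
  have dii3 : v i ≠ v (i+3) := by
    intro h; have := hv h; simp only [Fin.ext_iff, Fin.add_def] at this; omega
  have di3i1 : v (i+3) ≠ v (i+1) := by
    intro h; have := hv h; simp only [Fin.ext_iff, Fin.add_def] at this; omega
  by_cases hadj : G.Adj x y
  · -- non-edges: v i - v(i+3),  x - v(i+4) - y
    exact hfree2.false (Classical.choice (coP2P3_embed G (v i) (v (i+3)) x (v (i+4)) y
      hxi.symm hvii4 hyi.symm hxi3.symm hvi3i4 hyi3.symm hadj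
      hvii3 hxi4 (fun h => hyi4 h.symm)
      dii3 (hxne (i+4)) (fun h => hyne (i+4) h.symm)))
  · -- non-edges: x - y,  v i - v(i+3) - v(i+1)
    exact hfree2.false (Classical.choice (coP2P3_embed G x y (v i) (v (i+3)) (v (i+1))
      hxi hxi3 hxi1 hyi hyi3 hyi1 (by rw [cyc]; left; rfl)
      hadj hvii3 (fun h => hvi1i3 h.symm)
      hxy dii3 di3i1))
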